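/- arXiv:math/0006227 — 2 statements merged into one kernel-verified Lean document; each statement's English description precedes it below -/
import Mathlib

section
/- Let k ≥ 1 and let s be a nonzero complex number with s^{2m} ≠ 1 for all integers m with 1 ≤ m ≤ 2k+1. If α = s^{−2k} or α = −s^{−2k}, then Wenzl's quantum dimension of the single-row partition (2k+1) equals 1: ⟨(2k+1)⟩_{α,s} = 1. -/
open Finset

/-- Quantum integer `[m] = (s^m - s^{-m})/(s - s⁻¹)`. -/
noncomputable def qint (s : ℂ) (m : ℤ) : ℂ := (s ^ m - s ^ (-m)) / (s - s⁻¹)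

/-- Quantum integer `[m]_α = (α s^m - α⁻¹ s^{-m})/(s - s⁻¹)`. -/
noncomputable def qintA (α s : ℂ) (m : ℤ) : ℂ := (α * s ^ m - α⁻¹ * s ^ (-m)) / (s - s⁻¹)

/-- The cells `(i,j)` (row `i`, column `j`, both 1-based) of the Young diagram of
the partition `lam`, assuming all parts of index `> N` vanish. -/
def cells (lam : ℕ → ℕ) (N : ℕ) : Finset (ℕ × ℕ) :=
  (Finset.Icc 1 N ×ˢ Finset.Icc 1 (lam 1)).filter (fun p => p.2 ≤ lam p.1)

/-- Hook length `hl(i,j) = λ_i + λ^∨_j - i - j + 1`. -/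
def hookl (lam lamV : ℕ → ℕ) (p : ℕ × ℕ) : ℤ :=
  (lam p.1 : ℤ) + (lamV p.2 : ℤ) - p.1 - p.2 + 1

/-- `d_λ(i,j)`: equals `λ_i + λ_j - i - j + 1` if `i ≤ j`, and
`-λ^∨_i - λ^∨_j + i + j - 1` if `i > j`. -/
def dcell (lam lamV : ℕ → ℕ) (p : ℕ × ℕ) : ℤ :=
  if p.1 ≤ p.2 then (lam p.1 : ℤ) + (lam p.2 : ℤ) - p.1 - p.2 + 1
  else -(lamV p.1 : ℤ) - (lamV p.2 : ℤ) + p.1 + p.2 - 1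

/-- `d'_λ(i,j)`: equals `λ_i + λ_j - i - j + 1` if `i < j`, and
`-λ^∨_i - λ^∨_j + i + j - 1` if `i ≥ j`. -/
def dcell' (lam lamV : ℕ → ℕ) (p : ℕ × ℕ) : ℤ :=
  if p.1 < p.2 then (lam p.1 : ℤ) + (lam p.2 : ℤ) - p.1 - p.2 + 1
  else -(lamV p.1 : ℤ) - (lamV p.2 : ℤ) + p.1 + p.2 - 1

/-- Wenzl's quantum dimension
`⟨λ⟩_{α,s} = ∏_{(j,j)∈λ} ([λ_j - λ^∨_j]_α + [hl(j,j)])/[hl(j,j)] ·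
∏_{(i,j)∈λ, i≠j} [d_λ(i,j)]_α/[hl(i,j)]`. -/
noncomputable def wenzl (α s : ℂ) (lam lamV : ℕ → ℕ) (N : ℕ) : ℂ :=
  (∏ p ∈ (cells lam N).filter (fun p => p.1 = p.2),
      (qintA α s ((lam p.1 : ℤ) - (lamV p.1 : ℤ)) + qint s (hookl lam lamV p)) /
        qint s (hookl lam lamV p)) *
  ∏ p ∈ (cells lam N).filter (fun p => p.1 ≠ p.2),
      qintA α s (dcell lam lamV p) / qint s (hookl lam lamV p)


/-- The single-column partition `1^j` (j parts equal to 1), as a 1-based part function. -/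
def colPart (j : ℕ) : ℕ → ℕ := fun i => if 1 ≤ i ∧ i ≤ j then 1 else 0

/-- The single-row partition `(j)`, as a 1-based part function. -/
def rowPart (j : ℕ) : ℕ → ℕ := fun i => if i = 1 then j else 0


-- Auxiliary lemmas

lemma qint_neg (s : ℂ) (m : ℤ) : qint s (-m) = -qint s m := by
  unfold qint
  rw [neg_neg, ← neg_sub, neg_div]

lemma qint_zero (s : ℂ) : qint s 0 = 0 := by
  simp [qint]

lemma sub_inv_ne_zero (s : ℂ) (hs : s ≠ 0) (h2 : s ^ 2 ≠ 1) : s - s⁻¹ ≠ 0 := by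
  intro h
  apply h2
  have hss : s = s⁻¹ := sub_eq_zero.mp h
  calc s ^ 2 = s * s := sq s
    _ = s * s⁻¹ := by rw [← hss]
    _ = 1 := mul_inv_cancel₀ hs

lemma qintA_eps (s : ℂ) (hs : s ≠ 0) (ε : ℂ) (hε : ε = 1 ∨ ε = -1) (t m : ℤ) :
    qintA (ε * s ^ (-t)) s m = ε * qint s (m - t) := by
  have hε2 : ε⁻¹ = ε := by rcases hε with h | h <;> subst h <;> norm_num
  have hinv : (ε * s ^ (-t))⁻¹ = ε * s ^ t := by
    rw [mul_inv, hε2, zpow_neg, inv_inv]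
  unfold qintA qint
  rw [hinv]
  have h1 : ε * s ^ (-t) * s ^ m = ε * s ^ (m - t) := by
    rw [mul_assoc, ← zpow_add₀ hs]; ring_nf
  have h2 : ε * s ^ t * s ^ (-m) = ε * s ^ (-(m - t)) := by
    rw [mul_assoc, ← zpow_add₀ hs]; ring_nf
  rw [h1, h2, ← mul_sub, mul_div_assoc]

lemma qint_nat_ne_zero (s : ℂ) (hs : s ≠ 0) (m : ℕ) (hm : 1 ≤ m)
    (h1 : s ^ 2 ≠ 1) (h2 : s ^ (2 * m) ≠ 1) : qint s (m : ℤ) ≠ 0 := by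
  have hd : s - s⁻¹ ≠ 0 := sub_inv_ne_zero s hs h1
  have hnum : s ^ (m : ℤ) - s ^ (-(m : ℤ)) ≠ 0 := by
    intro h
    apply h2
    have he : s ^ (m : ℤ) = s ^ (-(m : ℤ)) := sub_eq_zero.mp h
    have key : s ^ (2 * m) = s ^ (m : ℤ) * s ^ (-(m : ℤ)) := by
      rw [← he, ← zpow_add₀ hs, ← zpow_natCast s (2 * m)]
      congr 1
      push_cast; ring
    rw [key, ← zpow_add₀ hs]
    simp
  exact div_ne_zero hnum hd

/-- For `α = s^{-2k}` or `α = -s^{-2k}`, the quantum dimension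
of the single row `(2k+1)` equals `1`. -/
theorem wenzl_row_B (k : ℕ) (hk : 1 ≤ k) (s : ℂ) (hs : s ≠ 0)
    (hroot : ∀ m : ℕ, 1 ≤ m → m ≤ 2 * k + 1 → s ^ (2 * m) ≠ 1)
    (α : ℂ) (hα : α = s ^ (-(2 * (k : ℤ))) ∨ α = -s ^ (-(2 * (k : ℤ)))) :
    wenzl α s (rowPart (2 * k + 1)) (colPart (2 * k + 1)) 1 = 1 := by
  -- setup
  set n : ℕ := 2 * k + 1 with hn
  obtain ⟨ε, hε, hαe⟩ : ∃ ε : ℂ, (ε = 1 ∨ ε = -1) ∧ α = ε * s ^ (-(2 * (k : ℤ))) := by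
    rcases hα with h | h
    · exact ⟨1, Or.inl rfl, by rw [h, one_mul]⟩
    · exact ⟨-1, Or.inr rfl, by rw [h, neg_one_mul]⟩
  have h2 : s ^ 2 ≠ 1 := by
    have := hroot 1 le_rfl (by omega); simpa using this
  have hd : s - s⁻¹ ≠ 0 := sub_inv_ne_zero s hs h2
  have hqne : ∀ m : ℕ, 1 ≤ m → m ≤ n → qint s (m : ℤ) ≠ 0 := fun m h1 h2' =>
    qint_nat_ne_zero s hs m h1 h2 (hroot m h1 h2')
  -- compute the cell set
  have hcells : cells (rowPart n) 1 = {1} ×ˢ Finset.Icc 1 n := by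
    ext ⟨i, j⟩
    simp only [cells, rowPart, Finset.mem_filter, Finset.mem_product, Finset.mem_Icc,
      Finset.mem_singleton]
    by_cases hi : i = 1 <;> simp [hi] <;> omega
  have hdiag : (cells (rowPart n) 1).filter (fun p => p.1 = p.2) = {(1, 1)} := by
    rw [hcells]
    ext ⟨i, j⟩
    simp only [Finset.mem_filter, Finset.mem_product, Finset.mem_Icc, Finset.mem_singleton,
      Prod.mk.injEq]
    omega
  have hoff : (cells (rowPart n) 1).filter (fun p => p.1 ≠ p.2) = {1} ×ˢ Finset.Icc 2 n := by
    rw [hcells]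
    ext ⟨i, j⟩
    simp only [Finset.mem_filter, Finset.mem_product, Finset.mem_Icc, Finset.mem_singleton,
      ne_eq]
    omega
  -- values at cells
  have hlam1 : rowPart n 1 = n := by simp [rowPart]
  have hlamV1 : colPart n 1 = 1 := by simp [colPart]
  unfold wenzl
  rw [hdiag, hoff, Finset.prod_singleton]
  -- diagonal factor
  have hhook11 : hookl (rowPart n) (colPart n) (1, 1) = (n : ℤ) := by
    simp only [hookl, hlam1, hlamV1]; push_cast; ring
  have hqA0 : qintA α s ((rowPart n 1 : ℤ) - (colPart n 1 : ℤ)) = 0 := by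
    rw [hαe, qintA_eps s hs ε hε]
    have harg0 : (rowPart n 1 : ℤ) - (colPart n 1 : ℤ) - 2 * (k : ℤ) = 0 := by
      rw [hlam1, hlamV1]; push_cast [hn]; ring
    rw [harg0, qint_zero, mul_zero]
  have hdiagval : (qintA α s ((rowPart n 1 : ℤ) - (colPart n 1 : ℤ))
      + qint s (hookl (rowPart n) (colPart n) (1, 1))) /
      qint s (hookl (rowPart n) (colPart n) (1, 1)) = 1 := by
    rw [hqA0, zero_add, hhook11, div_self (hqne n (by omega) le_rfl)]
  rw [hdiagval, one_mul]
  -- off-diagonal product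
  rw [Finset.prod_product, Finset.prod_singleton]
  have hstep : ∀ j ∈ Finset.Icc 2 n,
      qintA α s (dcell (rowPart n) (colPart n) (1, j)) /
        qint s (hookl (rowPart n) (colPart n) (1, j)) =
      (-ε) * (qint s ((j : ℤ) - 1) / qint s ((n : ℤ) + 1 - j)) := by
    intro j hj
    rw [Finset.mem_Icc] at hj
    have hlamj : rowPart n j = 0 := by simp [rowPart]; omega
    have hlamVj : colPart n j = 1 := by simp [colPart]; omega
    have hdc : dcell (rowPart n) (colPart n) (1, j) = (n : ℤ) - j := by
      simp only [dcell]
      rw [if_pos (by omega : (1 : ℕ) ≤ j)]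
      rw [hlam1, hlamj]; push_cast; ring
    have hhl : hookl (rowPart n) (colPart n) (1, j) = (n : ℤ) + 1 - j := by
      simp only [hookl, hlam1, hlamVj]; push_cast; ring
    rw [hdc, hhl, hαe, qintA_eps s hs ε hε]
    have harg : (n : ℤ) - j - 2 * (k : ℤ) = -((j : ℤ) - 1) := by push_cast [hn]; ring
    rw [harg, qint_neg, mul_neg, ← neg_mul, mul_div_assoc]
  rw [Finset.prod_congr rfl hstep, Finset.prod_mul_distrib, Finset.prod_const,
    Nat.card_Icc]
  have hsign : (-ε) ^ (n + 1 - 2) = 1 := by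
    have hcard : n + 1 - 2 = 2 * k := by omega
    rw [hcard, pow_mul]
    have hsq : (-ε) ^ 2 = 1 := by rcases hε with h | h <;> subst h <;> norm_num
    rw [hsq, one_pow]
  rw [hsign, one_mul, Finset.prod_div_distrib]
  have hre : ∏ j ∈ Finset.Icc 2 n, qint s ((j : ℤ) - 1) =
      ∏ j ∈ Finset.Icc 2 n, qint s ((n : ℤ) + 1 - j) := by
    refine Finset.prod_nbij' (fun j => n + 2 - j) (fun j => n + 2 - j) ?_ ?_ ?_ ?_ ?_
    · intro j hj; rw [Finset.mem_Icc] at *; omega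
    · intro j hj; rw [Finset.mem_Icc] at *; omega
    · intro j hj; rw [Finset.mem_Icc] at hj; omega
    · intro j hj; rw [Finset.mem_Icc] at hj; omega
    · intro j hj
      rw [Finset.mem_Icc] at hj
      congr 1
      have hc : ((n + 2 - j : ℕ) : ℤ) = (n : ℤ) + 2 - j := by omega
      rw [hc]; omega
  rw [hre]
  refine div_self ?_
  rw [Finset.prod_ne_zero_iff]
  intro j hj
  rw [Finset.mem_Icc] at hj
  have hc : (n : ℤ) + 1 - j = ((n + 1 - j : ℕ) : ℤ) := by omega
  rw [hc]
  exact hqne (n + 1 - j) (by omega) (by omega)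
end

section
/- Let n, k ≥ 1, set l = 2n+2k+1, let s ∈ ℂ be a primitive 2l-th root of unity, and let g ≥ 1 be an integer. For a partition λ = (λ_1,…,λ_n) with at most n parts define Q(λ) = (−1)^{|λ|} ∏_{j=1}^{n} [2n+2+2λ_j−2j]_s/[2n+2−2j]_s · ∏_{1≤i<j≤n} [2n+2+λ_i−i+λ_j−j]_s·[λ_i−i−λ_j+j]_s / ([2n+2−i−j]_s·[j−i]_s), where [m]_s = s^m − s^{−m}. Let Γ = {partitions λ with λ_1 ≤ k and at most n parts}. Then (∑_{λ∈Γ} Q(λ)²)^{g−1} · ∑_{λ∈Γ} Q(λ)^{2(1−g)} = (−(2n+2k+1))^{n(g−1)} · ∑_{n+k ≥ l_1 > l_2 > … > l_n > 0} ( ∏_{j=1}^{n} [2l_j]_s · ∏_{1≤i<j≤n} [l_i+l_j]_s·[l_i−l_j]_s )^{2(1−g)}, where the sum on the right runs over all strictly decreasing n-tuples of integers (l_1,…,l_n) with n+k ≥ l_1 and l_n > 0, and negative integer powers denote inverses in ℂ. -/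
open Finset

/-- `[m]_s = s^m - s^{-m}`. -/
noncomputable def br (s : ℂ) (m : ℤ) : ℂ := s ^ m - s ^ (-m)

/-- The quantum dimension `Q(λ)` of the simple object of `C^{n,k}` labelled by the
partition `λ = (λ_1,…,λ_n)` (here `f : Fin n → ℕ` with `f j = λ_{j+1}`):
`Q(λ) = (-1)^{|λ|} ∏_{j=1}^n [2n+2+2λ_j-2j]/[2n+2-2j] ·
∏_{1≤i<j≤n} [2n+2+λ_i-i+λ_j-j]·[λ_i-i-λ_j+j] / ([2n+2-i-j]·[j-i])`. -/
noncomputable def Qdim (s : ℂ) (n : ℕ) (f : Fin n → ℕ) : ℂ :=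
  (-1 : ℂ) ^ (∑ j, f j) *
  (∏ j : Fin n,
    br s (2 * n + 2 + 2 * (f j : ℤ) - 2 * ((j : ℕ) + 1)) /
      br s (2 * n + 2 - 2 * (((j : ℕ) : ℤ) + 1))) *
  ∏ p ∈ (Finset.univ ×ˢ Finset.univ : Finset (Fin n × Fin n)).filter (fun p => p.1 < p.2),
    br s (2 * n + 2 + (f p.1 : ℤ) - ((p.1 : ℕ) + 1) + (f p.2 : ℤ) - ((p.2 : ℕ) + 1)) *
      br s ((f p.1 : ℤ) - ((p.1 : ℕ) + 1) - (f p.2 : ℤ) + ((p.2 : ℕ) + 1)) /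
    (br s (2 * n + 2 - (((p.1 : ℕ) : ℤ) + 1) - (((p.2 : ℕ) : ℤ) + 1)) *
      br s ((((p.2 : ℕ) : ℤ) + 1) - (((p.1 : ℕ) : ℤ) + 1)))

/-- The labelling set `Γ = Γ(C^{n,k})`: partitions with at most `n` parts, each `≤ k`. -/
noncomputable def GammaC (n k : ℕ) : Finset (Fin n → ℕ) :=
  (Finset.Icc 0 (fun _ => k)).filter (fun f => ∀ i j : Fin n, i ≤ j → f j ≤ f i)

/-- The index set of strictly decreasing tuples `n+k ≥ l_1 > l_2 > … > l_n > 0`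
(with `t j = l_{j+1}`). -/
noncomputable def Tuples (n k : ℕ) : Finset (Fin n → ℕ) :=
  (Finset.Icc 0 (fun _ => n + k)).filter
    (fun t => (∀ i j : Fin n, i < j → t j < t i) ∧ ∀ i, 0 < t i)

/-- `∏_{j=1}^n [2l_j]_s · ∏_{1≤i<j≤n} [l_i+l_j]_s [l_i-l_j]_s`. -/
noncomputable def Pprod (s : ℂ) (n : ℕ) (t : Fin n → ℕ) : ℂ :=
  (∏ j : Fin n, br s (2 * (t j : ℤ))) *
  ∏ p ∈ (Finset.univ ×ˢ Finset.univ : Finset (Fin n × Fin n)).filter (fun p => p.1 < p.2),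
    br s ((t p.1 : ℤ) + (t p.2 : ℤ)) * br s ((t p.1 : ℤ) - (t p.2 : ℤ))

noncomputable def Spoly : ℕ → Polynomial ℂ
  | 0 => 1
  | 1 => Polynomial.X
  | (c+2) => Polynomial.X * Spoly (c+1) - Spoly c

lemma Spoly_monic_deg : ∀ c, (Spoly c).Monic ∧ (Spoly c).natDegree = c := by
  intro c
  induction c using Nat.twoStepInduction with
  | zero => exact ⟨Polynomial.monic_one, by simp [Spoly]⟩
  | one => exact ⟨Polynomial.monic_X, by simp [Spoly]⟩
  | more c ih1 ih2 =>
    have h1 : (Polynomial.X * Spoly (c+1)).Monic := Polynomial.monic_X.mul ih2.1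
    have hd : (Polynomial.X * Spoly (c+1)).natDegree = c + 2 := by
      rw [Polynomial.natDegree_mul Polynomial.X_ne_zero ih2.1.ne_zero,
        Polynomial.natDegree_X, ih2.2]
      omega
    have hdeg : (-(Spoly c)).degree < (Polynomial.X * Spoly (c+1)).degree := by
      rw [Polynomial.degree_neg, Polynomial.degree_eq_natDegree h1.ne_zero, hd]
      calc (Spoly c).degree ≤ ((Spoly c).natDegree : WithBot ℕ) := Polynomial.degree_le_natDegree
        _ = (c : WithBot ℕ) := by rw [ih1.2]
        _ < ((c+2 : ℕ) : WithBot ℕ) := by exact_mod_cast by omega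
    have hm : (Spoly (c+2)).Monic := by
      rw [Spoly, sub_eq_add_neg]
      exact h1.add_of_left hdeg
    refine ⟨hm, ?_⟩
    rw [Spoly, sub_eq_add_neg, Polynomial.natDegree_add_eq_left_of_degree_lt hdeg, hd]

lemma Spoly_eval (w v : ℂ) (h : w * v = 1) : ∀ c,
    w ^ (c+1) - v ^ (c+1) = (w - v) * (Spoly c).eval (w + v) := by
  intro c
  induction c using Nat.twoStepInduction with
  | zero => simp [Spoly]
  | one => simp [Spoly]; ring
  | more c ih1 ih2 =>
    rw [Spoly]
    simp only [Polynomial.eval_sub, Polynomial.eval_mul, Polynomial.eval_X]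
    have e : (w - v) * ((w + v) * (Spoly (c+1)).eval (w + v) - (Spoly c).eval (w+v))
        = (w + v) * ((w - v) * (Spoly (c+1)).eval (w + v)) - (w - v) * (Spoly c).eval (w+v) := by
      ring
    rw [e, ← ih1, ← ih2]
    linear_combination (v^(c+1) - w^(c+1)) * h

section
variable {n : ℕ} (s : ℂ)

lemma prod_pairs (h : Fin n × Fin n → ℂ) :
    ∏ p ∈ (Finset.univ ×ˢ Finset.univ : Finset (Fin n × Fin n)).filter (fun p => p.1 < p.2), h p
      = ∏ i : Fin n, ∏ j ∈ Finset.Ioi i, h (i, j) := by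
  rw [Finset.prod_filter, Finset.prod_product]
  refine Finset.prod_congr rfl fun i _ => ?_
  rw [Finset.prod_ite, Finset.prod_const_one, mul_one]
  refine Finset.prod_congr ?_ fun _ _ => rfl
  ext j; simp

/-- `[a+b][a-b] = (s^{2a}+s^{-2a}) - (s^{2b}+s^{-2b})`. -/
lemma br_pair (hs0 : s ≠ 0) (a b : ℤ) :
    br s (a + b) * br s (a - b)
      = (s ^ (2*a) + s ^ (-(2*a))) - (s ^ (2*b) + s ^ (-(2*b))) := by
  have hx : s ^ a ≠ 0 := zpow_ne_zero _ hs0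
  have hy : s ^ b ≠ 0 := zpow_ne_zero _ hs0
  have e1 : br s (a + b) = s^a * s^b - (s^a * s^b)⁻¹ := by
    rw [br, zpow_neg, zpow_add₀ hs0]
  have e2 : br s (a - b) = s^a / s^b - (s^a / s^b)⁻¹ := by
    rw [br, zpow_neg, zpow_sub₀ hs0]
  have e3 : s ^ (2*a) = (s^a)^2 := by rw [two_mul, zpow_add₀ hs0, sq]
  have e4 : s ^ (2*b) = (s^b)^2 := by rw [two_mul, zpow_add₀ hs0, sq]
  have e5 : s ^ (-(2*a)) = ((s^a)^2)⁻¹ := by rw [zpow_neg, e3]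
  have e6 : s ^ (-(2*b)) = ((s^b)^2)⁻¹ := by rw [zpow_neg, e4]
  rw [e1, e2, e3, e4, e5, e6]
  field_simp
  ring

lemma det_helper (w : Fin n → ℂ) (hw : ∀ i, w i ≠ 0) :
    (Matrix.of fun i j : Fin n => w i ^ ((j:ℕ)+1) - ((w i)⁻¹) ^ ((j:ℕ)+1)).det
      = (∏ i, (w i - (w i)⁻¹)) *
        ∏ i : Fin n, ∏ j ∈ Finset.Ioi i, ((w j + (w j)⁻¹) - (w i + (w i)⁻¹)) := by
  have hv : (Matrix.of fun i j : Fin n =>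
        (Spoly (j:ℕ)).eval (w i + (w i)⁻¹)).det
      = ∏ i : Fin n, ∏ j ∈ Finset.Ioi i, ((w j + (w j)⁻¹) - (w i + (w i)⁻¹)) := by
    rw [← Matrix.det_eval_matrixOfPolynomials_eq_det_vandermonde
      (fun i => w i + (w i)⁻¹) (fun j => Spoly (j:ℕ))
      (fun j => (Spoly_monic_deg (j:ℕ)).2) (fun j => (Spoly_monic_deg (j:ℕ)).1),
      Matrix.det_vandermonde]
  have key : (Matrix.of fun i j : Fin n => w i ^ ((j:ℕ)+1) - ((w i)⁻¹) ^ ((j:ℕ)+1))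
      = Matrix.of fun i j : Fin n => (w i - (w i)⁻¹) *
          (Matrix.of fun i j : Fin n => (Spoly (j:ℕ)).eval (w i + (w i)⁻¹)) i j := by
    ext i j
    simp only [Matrix.of_apply]
    exact Spoly_eval (w i) (w i)⁻¹ (mul_inv_cancel₀ (hw i)) (j:ℕ)
  rw [key, Matrix.det_mul_column, hv]

/-- The determinant form of `Pprod`, up to an explicit sign. -/
lemma Pprod_eq_det (hs0 : s ≠ 0) (t : Fin n → ℕ) :
    Pprod s n t
      = (∏ _p ∈ (Finset.univ ×ˢ Finset.univ : Finset (Fin n × Fin n)).filter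
            (fun p => p.1 < p.2), (-1 : ℂ)) *
        (Matrix.of fun i j : Fin n => br s (2 * (t i : ℤ) * ((j : ℕ) + 1))).det := by
  have hwne : ∀ i : Fin n, s ^ (2 * (t i : ℤ)) ≠ 0 := fun i => zpow_ne_zero _ hs0
  have hent : (Matrix.of fun i j : Fin n => br s (2 * (t i : ℤ) * ((j : ℕ) + 1)))
      = Matrix.of fun i j : Fin n =>
        (s ^ (2 * (t i : ℤ))) ^ ((j:ℕ)+1) - ((s ^ (2 * (t i : ℤ)))⁻¹) ^ ((j:ℕ)+1) := by
    ext i j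
    have h1 : s ^ (2 * (t i : ℤ) * ((j : ℕ) + 1)) = (s ^ (2 * (t i : ℤ))) ^ ((j : ℕ) + 1) := by
      rw [← zpow_natCast (s ^ (2 * (t i : ℤ))), ← zpow_mul]
      push_cast; ring_nf
    have h2 : s ^ (-(2 * (t i : ℤ) * ((j : ℕ) + 1)))
        = ((s ^ (2 * (t i : ℤ)))⁻¹) ^ ((j : ℕ) + 1) := by
      rw [inv_pow, ← h1, zpow_neg]
    simp only [Matrix.of_apply, br, h1, h2]
  rw [hent, det_helper _ hwne, Pprod]
  have h1 : ∀ j : Fin n, br s (2 * (t j : ℤ)) = s ^ (2 * (t j : ℤ)) - (s ^ (2 * (t j : ℤ)))⁻¹ := by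
    intro j; rw [br, zpow_neg]
  have h2 : ∀ p : Fin n × Fin n,
      br s ((t p.1 : ℤ) + (t p.2 : ℤ)) * br s ((t p.1 : ℤ) - (t p.2 : ℤ))
      = (-1 : ℂ) * ((s ^ (2 * (t p.2 : ℤ)) + (s ^ (2 * (t p.2 : ℤ)))⁻¹)
          - (s ^ (2 * (t p.1 : ℤ)) + (s ^ (2 * (t p.1 : ℤ)))⁻¹)) := by
    intro p
    rw [br_pair s hs0]
    simp only [zpow_neg]
    ring
  simp only [h1]
  rw [Finset.prod_congr rfl fun p _ => h2 p, Finset.prod_mul_distrib,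
    prod_pairs (fun p => (s ^ (2 * (t p.2 : ℤ)) + (s ^ (2 * (t p.2 : ℤ)))⁻¹)
      - (s ^ (2 * (t p.1 : ℤ)) + (s ^ (2 * (t p.1 : ℤ)))⁻¹))]
  ring
end

section
lemma Esum (ζ : ℂ) (L N : ℕ) (hζ : IsPrimitiveRoot ζ L) (hL : L = 2*N+1) (c : ℤ) :
    ∑ m ∈ Finset.Icc 1 N, (ζ^((m:ℤ)*c) + ζ^(-((m:ℤ)*c)))
      = (if (L:ℤ) ∣ c then (L:ℂ) else 0) - 1 := by
  have hLpos : 0 < L := by omega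
  have hζ0 : ζ ≠ 0 := hζ.ne_zero hLpos.ne'
  set x : ℂ := ζ ^ c with hx
  have hx0 : x ≠ 0 := zpow_ne_zero _ hζ0
  have hxL : x ^ L = 1 := by
    rw [hx, ← zpow_natCast (ζ ^ c) L, ← zpow_mul, mul_comm, zpow_mul,
      zpow_natCast, hζ.pow_eq_one, one_zpow]
  have hterm : ∀ m : ℕ, ζ^((m:ℤ)*c) + ζ^(-((m:ℤ)*c)) = x^m + (x⁻¹)^m := by
    intro m
    have t1 : ζ^((m:ℤ)*c) = x^m := by rw [mul_comm, zpow_mul, zpow_natCast, ← hx]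
    have t2 : ζ^(-((m:ℤ)*c)) = (x⁻¹)^m := by rw [zpow_neg, t1, inv_pow]
    rw [t1, t2]
  have hrange : ∑ m ∈ Finset.range L, x^m = if (L:ℤ) ∣ c then (L:ℂ) else 0 := by
    split_ifs with h
    · have : x = 1 := (hζ.zpow_eq_one_iff_dvd c).mpr h
      simp [this]
    · have hx1 : x ≠ 1 := fun hx1 => h ((hζ.zpow_eq_one_iff_dvd c).mp (hx ▸ hx1))
      rw [geom_sum_eq hx1, hxL]
      simp
  have hsplit : ∑ m ∈ Finset.range L, x^m
      = 1 + ∑ m ∈ Finset.Icc 1 N, x^m + ∑ m ∈ Finset.Icc (N+1) (2*N), x^m := by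
    have h1 : Finset.Icc 1 N = Finset.Ioc 0 N := by ext m; simp; omega
    have h2 : Finset.Icc (N+1) (2*N) = Finset.Ioc N (2*N) := by ext m; simp
    rw [h1, h2, add_assoc, Finset.sum_Ioc_consecutive _ (by omega : 0 ≤ N) (by omega : N ≤ 2*N)]
    have h3 : Finset.range L = Finset.Ico 0 L := by rw [Finset.range_eq_Ico]
    rw [h3, Finset.sum_eq_sum_Ico_succ_bot hLpos]
    have h4 : Finset.Ico 1 L = Finset.Ioc 0 (2*N) := by ext m; simp; omega
    rw [h4, pow_zero]
  have hrev : ∑ m ∈ Finset.Icc 1 N, (x⁻¹)^m = ∑ m ∈ Finset.Icc (N+1) (2*N), x^m := by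
    refine Finset.sum_nbij' (fun m => L - m) (fun m => L - m) ?_ ?_ ?_ ?_ ?_
    · intro m hm; simp only [Finset.mem_Icc] at *; omega
    · intro m hm; simp only [Finset.mem_Icc] at *; omega
    · intro m hm; simp only [Finset.mem_Icc] at hm; show L - (L - m) = m; omega
    · intro m hm; simp only [Finset.mem_Icc] at hm; show L - (L - m) = m; omega
    · intro m hm
      simp only [Finset.mem_Icc] at hm
      have hmL : m ≤ L := by omega
      have : x ^ (L - m) * x ^ m = 1 := by rw [← pow_add, Nat.sub_add_cancel hmL, hxL]
      rw [inv_pow, eq_comm]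
      exact eq_inv_of_mul_eq_one_left this
  calc ∑ m ∈ Finset.Icc 1 N, (ζ^((m:ℤ)*c) + ζ^(-((m:ℤ)*c)))
      = ∑ m ∈ Finset.Icc 1 N, (x^m + (x⁻¹)^m) := by
        exact Finset.sum_congr rfl fun m _ => hterm m
    _ = ∑ m ∈ Finset.Icc 1 N, x^m + ∑ m ∈ Finset.Icc (N+1) (2*N), x^m := by
        rw [Finset.sum_add_distrib, hrev]
    _ = (if (L:ℤ) ∣ c then (L:ℂ) else 0) - 1 := by rw [← hrange, hsplit]; ring
end

section
variable {n k : ℕ} {s : ℂ}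

lemma br_ne_zero (hs : IsPrimitiveRoot s (2 * (2*n+2*k+1))) {m : ℤ}
    (h1 : 0 < m) (h2 : m < (2*n+2*k+1 : ℕ)) : br s m ≠ 0 := by
  have hs0 : s ≠ 0 := hs.ne_zero (by positivity)
  intro h
  have h3 : s ^ m = s ^ (-m) := sub_eq_zero.mp h
  have h4 : s ^ (2*m) = 1 := by
    rw [two_mul, zpow_add₀ hs0]
    nth_rewrite 1 [h3]
    rw [← zpow_add₀ hs0]
    simp
  have h5 : ((2 * (2*n+2*k+1) : ℕ) : ℤ) ∣ 2*m := (hs.zpow_eq_one_iff_dvd _).mp h4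
  have h5' : (2:ℤ) * ((2*n+2*k+1 : ℕ) : ℤ) ∣ 2 * m := by exact_mod_cast h5
  have h6 : ((2*n+2*k+1 : ℕ) : ℤ) ∣ m :=
    (mul_dvd_mul_iff_left (by norm_num : (2:ℤ) ≠ 0)).mp h5'
  have h7 := Int.le_of_dvd h1 h6
  omega

lemma Gorth (hs : IsPrimitiveRoot s (2 * (2*n+2*k+1))) (a b : Fin n) :
    ∑ m ∈ Finset.Icc 1 (n+k), br s (2*(m:ℤ)*((a:ℕ)+1)) * br s (2*(m:ℤ)*((b:ℕ)+1))
      = if a = b then -((2*n+2*k+1 : ℕ) : ℂ) else 0 := by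
  have hs0 : s ≠ 0 := hs.ne_zero (by positivity)
  set L : ℕ := 2*n+2*k+1 with hLdef
  have hLZ : (L:ℤ) = 2*(n:ℤ)+2*(k:ℤ)+1 := by rw [hLdef]; push_cast; ring
  have hζ : IsPrimitiveRoot (s^2) L := hs.pow (by positivity) rfl
  have hc1 : ∀ c : ℤ, s ^ (2*c) = (s^2) ^ c := by
    intro c
    rw [← zpow_natCast s 2, ← zpow_mul]
    norm_num
  have hc2 : ∀ c : ℤ, s ^ (-(2*c)) = (s^2) ^ (-c) := by
    intro c
    rw [zpow_neg, zpow_neg, hc1]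
  have key : ∀ m : ℕ, br s (2*(m:ℤ)*((a:ℕ)+1)) * br s (2*(m:ℤ)*((b:ℕ)+1))
      = ((s^2)^((m:ℤ)*((a:ℕ)+(b:ℕ)+2)) + (s^2)^(-((m:ℤ)*((a:ℕ)+(b:ℕ)+2))))
        - ((s^2)^((m:ℤ)*((a:ℕ)-(b:ℕ))) + (s^2)^(-((m:ℤ)*((a:ℕ)-(b:ℕ))))) := by
    intro m
    have e1 : 2*(m:ℤ)*((a:ℕ)+1) = (m:ℤ)*((a:ℕ)+(b:ℕ)+2) + (m:ℤ)*((a:ℕ)-(b:ℕ)) := by ring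
    have e2 : 2*(m:ℤ)*((b:ℕ)+1) = (m:ℤ)*((a:ℕ)+(b:ℕ)+2) - (m:ℤ)*((a:ℕ)-(b:ℕ)) := by ring
    rw [e1, e2, br_pair s hs0, hc1, hc1, hc2, hc2]
  rw [Finset.sum_congr rfl fun m _ => key m, Finset.sum_sub_distrib,
    Esum (s^2) L (n+k) hζ (by omega) ((a:ℕ)+(b:ℕ)+2),
    Esum (s^2) L (n+k) hζ (by omega) ((a:ℕ)-(b:ℕ))]
  have hd1 : ¬ ((L:ℤ) ∣ ((a:ℕ)+(b:ℕ)+2)) := by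
    intro h
    have h1 : (0:ℤ) < (a:ℕ)+(b:ℕ)+2 := by positivity
    have h2 := Int.le_of_dvd h1 h
    have ha := a.2; have hb := b.2
    omega
  rw [if_neg hd1]
  by_cases hab : a = b
  · have hz : ((a:ℕ):ℤ) - ((b:ℕ):ℤ) = 0 := by rw [hab]; ring
    rw [if_pos (show (L:ℤ) ∣ ((a:ℕ):ℤ) - ((b:ℕ):ℤ) by rw [hz]; exact dvd_zero _),
      if_pos hab]
    ring
  · have hd2 : ¬ ((L:ℤ) ∣ ((a:ℕ)-(b:ℕ))) := by
      intro h
      have hne : ((a:ℕ):ℤ) - ((b:ℕ):ℤ) ≠ 0 := by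
        intro h0
        exact hab (Fin.ext (by omega))
      have h2 := Int.le_of_dvd (abs_pos.mpr hne) ((dvd_abs _ _).mpr h)
      have ha := a.2; have hb := b.2
      rcases abs_cases (((a:ℕ):ℤ) - ((b:ℕ):ℤ)) with ⟨he,_⟩|⟨he,_⟩ <;>
        (rw [he] at h2; omega)
    rw [if_neg hd2, if_neg hab]
    ring
end

section
variable {n k : ℕ} {s : ℂ}

/-- The matrix whose determinant is (up to sign) `Pprod`. -/
noncomputable def Dmat (s : ℂ) (n : ℕ) (t : Fin n → ℕ) : Matrix (Fin n) (Fin n) ℂ :=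
  Matrix.of fun i j : Fin n => br s (2 * (t i : ℤ) * ((j : ℕ) + 1))

lemma sum_box (hs : IsPrimitiveRoot s (2 * (2*n+2*k+1))) :
    ∑ t ∈ Fintype.piFinset (fun _ : Fin n => Finset.Icc 1 (n+k)), (Dmat s n t).det ^ 2
      = ((Nat.factorial n : ℕ) : ℂ) * (-((2*n+2*k+1 : ℕ) : ℂ))^n := by
  have reindex : ∀ (t : Fin n → ℕ) (σ : Equiv.Perm (Fin n)),
      ∏ i, (Dmat s n t) (σ i) i = ∏ i, (Dmat s n t) i (σ⁻¹ i) := by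
    intro t σ
    rw [← Equiv.prod_comp σ (fun i => (Dmat s n t) i (σ⁻¹ i))]
    refine Finset.prod_congr rfl fun i _ => ?_
    rw [show σ⁻¹ (σ i) = i from σ.symm_apply_apply i]
  have main : ∀ t : Fin n → ℕ, (Dmat s n t).det ^ 2
      = ∑ σ : Equiv.Perm (Fin n), ∑ τ : Equiv.Perm (Fin n),
          (((Equiv.Perm.sign σ : ℤ) : ℂ) * ((Equiv.Perm.sign τ : ℤ) : ℂ)) *
          ∏ i, (br s (2 * (t i : ℤ) * (((σ⁻¹ i : Fin n) : ℕ) + 1)) *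
                br s (2 * (t i : ℤ) * (((τ⁻¹ i : Fin n) : ℕ) + 1))) := by
    intro t
    rw [sq, Matrix.det_apply', Finset.sum_mul_sum]
    refine Finset.sum_congr rfl fun σ _ => Finset.sum_congr rfl fun τ _ => ?_
    rw [reindex t σ, reindex t τ]
    rw [mul_mul_mul_comm, ← Finset.prod_mul_distrib]
    rfl
  rw [Finset.sum_congr rfl fun t _ => main t, Finset.sum_comm]
  have swap2 : ∀ σ : Equiv.Perm (Fin n),
      (∑ t ∈ Fintype.piFinset (fun _ : Fin n => Finset.Icc 1 (n+k)),
        ∑ τ : Equiv.Perm (Fin n),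
          (((Equiv.Perm.sign σ : ℤ) : ℂ) * ((Equiv.Perm.sign τ : ℤ) : ℂ)) *
          ∏ i, (br s (2 * (t i : ℤ) * (((σ⁻¹ i : Fin n) : ℕ) + 1)) *
                br s (2 * (t i : ℤ) * (((τ⁻¹ i : Fin n) : ℕ) + 1))))
      = ∑ τ : Equiv.Perm (Fin n),
          (((Equiv.Perm.sign σ : ℤ) : ℂ) * ((Equiv.Perm.sign τ : ℤ) : ℂ)) *
          ∏ i, (∑ m ∈ Finset.Icc 1 (n+k),
            br s (2 * (m : ℤ) * (((σ⁻¹ i : Fin n) : ℕ) + 1)) *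
            br s (2 * (m : ℤ) * (((τ⁻¹ i : Fin n) : ℕ) + 1))) := by
    intro σ
    rw [Finset.sum_comm]
    refine Finset.sum_congr rfl fun τ _ => ?_
    rw [← Finset.mul_sum, Finset.sum_prod_piFinset (Finset.Icc 1 (n+k))
      (fun i m => br s (2*(m:ℤ)*(((σ⁻¹ i : Fin n) : ℕ)+1)) *
        br s (2*(m:ℤ)*(((τ⁻¹ i : Fin n) : ℕ)+1)))]
  rw [Finset.sum_congr rfl fun σ _ => swap2 σ]
  have inner : ∀ σ τ : Equiv.Perm (Fin n),
      (∏ i, (∑ m ∈ Finset.Icc 1 (n+k),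
        br s (2 * (m : ℤ) * (((σ⁻¹ i : Fin n) : ℕ) + 1)) *
        br s (2 * (m : ℤ) * (((τ⁻¹ i : Fin n) : ℕ) + 1))))
      = if σ = τ then (-((2*n+2*k+1 : ℕ) : ℂ))^n else 0 := by
    intro σ τ
    have e1 : ∀ i : Fin n, (∑ m ∈ Finset.Icc 1 (n+k),
        br s (2 * (m : ℤ) * (((σ⁻¹ i : Fin n) : ℕ) + 1)) *
        br s (2 * (m : ℤ) * (((τ⁻¹ i : Fin n) : ℕ) + 1)))
        = if σ⁻¹ i = τ⁻¹ i then -((2*n+2*k+1 : ℕ) : ℂ) else 0 := fun i => Gorth hs _ _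
    rw [Finset.prod_congr rfl fun i _ => e1 i]
    by_cases h : σ = τ
    · subst h
      simp
    · have : ∃ i, σ⁻¹ i ≠ τ⁻¹ i := by
        by_contra hc
        push_neg at hc
        exact h (by rw [← inv_inv σ, ← inv_inv τ]; exact congrArg _ (Equiv.ext hc))
      obtain ⟨i, hi⟩ := this
      rw [if_neg h]
      exact Finset.prod_eq_zero (Finset.mem_univ i) (if_neg hi)
  rw [Finset.sum_congr rfl fun σ _ => Finset.sum_congr rfl fun τ _ =>
    congrArg _ (inner σ τ)]
  have outer : ∀ σ : Equiv.Perm (Fin n),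
      (∑ τ : Equiv.Perm (Fin n),
        (((Equiv.Perm.sign σ : ℤ) : ℂ) * ((Equiv.Perm.sign τ : ℤ) : ℂ)) *
          (if σ = τ then (-((2*n+2*k+1 : ℕ) : ℂ))^n else 0))
      = (-((2*n+2*k+1 : ℕ) : ℂ))^n := by
    intro σ
    rw [Finset.sum_congr rfl (fun τ _ => by rw [mul_ite, mul_zero])]
    rw [Finset.sum_ite_eq (Finset.univ : Finset (Equiv.Perm (Fin n))) σ
      (fun τ => (((Equiv.Perm.sign σ : ℤ) : ℂ) * ((Equiv.Perm.sign τ : ℤ) : ℂ)) *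
        (-((2*n+2*k+1 : ℕ) : ℂ))^n)]
    rw [if_pos (Finset.mem_univ σ)]
    have : ((Equiv.Perm.sign σ : ℤ) : ℂ) * ((Equiv.Perm.sign σ : ℤ) : ℂ) = 1 := by
      rcases Int.isUnit_iff.mp (Equiv.Perm.sign σ).isUnit with h | h <;>
        rw [h] <;> norm_num
    rw [this, one_mul]
  rw [Finset.sum_congr rfl fun σ _ => outer σ, Finset.sum_const, Finset.card_univ,
    Fintype.card_perm, Fintype.card_fin, nsmul_eq_mul]
end

section
variable {n k : ℕ} {s : ℂ}

lemma mem_Tuples_iff {t : Fin n → ℕ} :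
    t ∈ Tuples n k ↔ (∀ i, t i ≤ n + k) ∧ (∀ i j : Fin n, i < j → t j < t i) ∧ ∀ i, 0 < t i := by
  simp only [Tuples, Finset.mem_filter, Finset.mem_Icc, and_assoc]
  constructor
  · rintro ⟨-, h2, h3, h4⟩
    exact ⟨fun i => h2 i, h3, h4⟩
  · rintro ⟨h1, h2, h3⟩
    exact ⟨fun i => Nat.zero_le _, fun i => h1 i, h2, h3⟩

lemma Tuples_injective {t : Fin n → ℕ} (ht : t ∈ Tuples n k) : Function.Injective t := by
  obtain ⟨-, hdec, -⟩ := mem_Tuples_iff.mp ht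
  intro a b hab
  by_contra hne
  rcases lt_or_gt_of_ne hne with h | h
  · exact absurd hab (ne_of_gt (hdec a b h))
  · exact absurd hab (ne_of_gt (hdec b a h)).symm

lemma det_noninj (t : Fin n → ℕ) (h : ¬ Function.Injective t) : (Dmat s n t).det = 0 := by
  rw [Function.not_injective_iff] at h
  obtain ⟨a, b, hab, hne⟩ := h
  exact Matrix.det_zero_of_row_eq hne (funext fun j => by simp [Dmat, hab])

lemma det_perm (t : Fin n → ℕ) (σ : Equiv.Perm (Fin n)) :
    (Dmat s n (t ∘ σ)).det = ((Equiv.Perm.sign σ : ℤ) : ℂ) * (Dmat s n t).det := by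
  have : Dmat s n (t ∘ σ) = (Dmat s n t).submatrix σ id := by
    ext i j; rfl
  rw [this, Matrix.det_permute]

lemma box_to_tuples :
    ∑ t ∈ Fintype.piFinset (fun _ : Fin n => Finset.Icc 1 (n+k)), (Dmat s n t).det ^ 2
      = ((Nat.factorial n : ℕ) : ℂ) * ∑ t ∈ Tuples n k, (Dmat s n t).det ^ 2 := by
  classical
  rw [← Finset.sum_filter_add_sum_filter_not
    (Fintype.piFinset (fun _ : Fin n => Finset.Icc 1 (n+k))) (fun t => Function.Injective t)]
  have h0 : ∑ t ∈ (Fintype.piFinset (fun _ : Fin n => Finset.Icc 1 (n+k))).filter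
      (fun t => ¬ Function.Injective t), (Dmat s n t).det ^ 2 = 0 := by
    refine Finset.sum_eq_zero fun t ht => ?_
    rw [det_noninj t (Finset.mem_filter.mp ht).2]
    ring
  rw [h0, add_zero]
  have key : ∑ p ∈ (Tuples n k) ×ˢ (Finset.univ : Finset (Equiv.Perm (Fin n))),
      (Dmat s n (p.1 ∘ p.2)).det ^ 2
      = ∑ t ∈ (Fintype.piFinset (fun _ : Fin n => Finset.Icc 1 (n+k))).filter
          (fun t => Function.Injective t), (Dmat s n t).det ^ 2 := by
    refine Finset.sum_nbij' (i := fun p => p.1 ∘ p.2)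
      (j := fun t => (t ∘ (Fin.revPerm.trans (Tuple.sort t)),
        (Fin.revPerm.trans (Tuple.sort t))⁻¹)) ?_ ?_ ?_ ?_ ?_
    · rintro ⟨d, σ⟩ hp
      obtain ⟨hd, -⟩ := Finset.mem_product.mp hp
      obtain ⟨hb, hdec, hpos⟩ := mem_Tuples_iff.mp hd
      have hinj : Function.Injective d := Tuples_injective hd
      refine Finset.mem_filter.mpr ⟨?_, hinj.comp σ.injective⟩
      refine Fintype.mem_piFinset.mpr fun i => Finset.mem_Icc.mpr ⟨hpos _, hb _⟩
    · intro t ht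
      obtain ⟨hbox, hinj⟩ := Finset.mem_filter.mp ht
      have hb := Fintype.mem_piFinset.mp hbox
      refine Finset.mem_product.mpr ⟨?_, Finset.mem_univ _⟩
      have hmono : StrictMono (t ∘ Tuple.sort t) :=
        (Tuple.monotone_sort t).strictMono_of_injective
          (hinj.comp (Tuple.sort t).injective)
      refine mem_Tuples_iff.mpr ⟨fun i => ?_, fun i j hij => ?_, fun i => ?_⟩
      · exact (Finset.mem_Icc.mp (hb _)).2
      · exact hmono (by simpa using Fin.rev_lt_rev.mpr hij)
      · exact (Finset.mem_Icc.mp (hb _)).1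
    · rintro ⟨d, σ⟩ hp
      obtain ⟨hd, -⟩ := Finset.mem_product.mp hp
      obtain ⟨hb, hdec, hpos⟩ := mem_Tuples_iff.mp hd
      have hinj : Function.Injective d := Tuples_injective hd
      set t : Fin n → ℕ := d ∘ σ with hT
      have htinj : Function.Injective t := hinj.comp σ.injective
      have hanti : ∀ i j : Fin n, i ≤ j → d j ≤ d i := by
        intro i j hij
        rcases eq_or_lt_of_le hij with h | h
        · rw [h]
        · exact le_of_lt (hdec i j h)
      have hυ : Monotone (t ∘ (Fin.revPerm.trans σ⁻¹)) := by
        intro a b hab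
        have : ∀ x : Fin n, (t ∘ (Fin.revPerm.trans σ⁻¹)) x = d (Fin.rev x) := by
          intro x
          simp [hT, Equiv.trans_apply, Function.comp_apply]
        rw [this a, this b]
        exact hanti _ _ (Fin.rev_le_rev.mpr hab)
      have huniq : t ∘ Tuple.sort t = t ∘ (Fin.revPerm.trans σ⁻¹) :=
        Tuple.unique_monotone (Tuple.monotone_sort t) hυ
      have hperm : Tuple.sort t = Fin.revPerm.trans σ⁻¹ := by
        apply Equiv.ext
        intro x
        exact htinj (congrFun huniq x)
      have hρ : Fin.revPerm.trans (Tuple.sort t) = σ⁻¹ := by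
        apply Equiv.ext
        intro x
        simp [hperm, Equiv.trans_apply]
      show (t ∘ (Fin.revPerm.trans (Tuple.sort t)), (Fin.revPerm.trans (Tuple.sort t))⁻¹) = (d, σ)
      rw [hρ]
      refine Prod.ext ?_ (by simp)
      funext j
      simp [hT, Function.comp_apply]
    · intro t ht
      funext j
      show t ((Fin.revPerm.trans (Tuple.sort t)) ((Fin.revPerm.trans (Tuple.sort t))⁻¹ j)) = t j
      rw [show (Fin.revPerm.trans (Tuple.sort t)) ((Fin.revPerm.trans (Tuple.sort t))⁻¹ j) = j from
        Equiv.apply_symm_apply _ j]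
    · intro p hp
      rfl
  rw [← key, Finset.sum_product]
  have hval : ∀ d ∈ Tuples n k, ∀ σ : Equiv.Perm (Fin n),
      (Dmat s n (d ∘ σ)).det ^ 2 = (Dmat s n d).det ^ 2 := by
    intro d _ σ
    rw [det_perm, mul_pow]
    have : ((Equiv.Perm.sign σ : ℤ) : ℂ) ^ 2 = 1 := by
      rcases Int.isUnit_iff.mp (Equiv.Perm.sign σ).isUnit with h | h <;> rw [h] <;> norm_num
    rw [this, one_mul]
  rw [Finset.sum_congr rfl fun d hd => Finset.sum_congr rfl fun σ _ => hval d hd σ]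
  rw [Finset.sum_congr rfl fun d _ => Finset.sum_const _, Finset.card_univ, Fintype.card_perm,
    Fintype.card_fin]
  rw [← Finset.smul_sum, nsmul_eq_mul]
end

/-- `emap f j = f j + (n - j)`, turning partitions into strictly decreasing tuples. -/
def emap (n : ℕ) (f : Fin n → ℕ) : Fin n → ℕ := fun j => f j + (n - (j : ℕ))

section
variable {n k : ℕ} {s : ℂ}

lemma emap_cast (f : Fin n → ℕ) (j : Fin n) :
    ((emap n f j : ℕ) : ℤ) = (f j : ℤ) + (n : ℤ) - ((j : ℕ) : ℤ) := by
  have hj : (j : ℕ) ≤ n := le_of_lt j.isLt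
  simp only [emap]
  push_cast [Nat.cast_sub hj]
  ring

lemma mem_GammaC_iff {f : Fin n → ℕ} :
    f ∈ GammaC n k ↔ (∀ j, f j ≤ k) ∧ ∀ i j : Fin n, i ≤ j → f j ≤ f i := by
  simp only [GammaC, Finset.mem_filter, Finset.mem_Icc]
  constructor
  · rintro ⟨⟨-, h2⟩, h3⟩
    exact ⟨fun j => h2 j, h3⟩
  · rintro ⟨h1, h2⟩
    exact ⟨⟨fun j => Nat.zero_le _, fun j => h1 j⟩, h2⟩

lemma Tuples_gap {t : Fin n → ℕ} (ht : t ∈ Tuples n k) :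
    ∀ d : ℕ, ∀ i j : Fin n, (j : ℕ) = (i : ℕ) + d → t j + d ≤ t i := by
  obtain ⟨-, hdec, -⟩ := mem_Tuples_iff.mp ht
  intro d
  induction d with
  | zero =>
    intro i j h
    have : i = j := Fin.ext h.symm
    subst this; simp
  | succ d ih =>
    intro i j h
    have hj' : (i : ℕ) + d < n := by have := j.isLt; omega
    have h1 : t j < t ⟨(i : ℕ) + d, hj'⟩ := by
      refine hdec _ _ ?_
      show ((⟨(i : ℕ) + d, hj'⟩ : Fin n) : ℕ) < (j : ℕ)
      simp; omega
    have h2 := ih i ⟨(i : ℕ) + d, hj'⟩ rfl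
    omega

lemma sum_Gamma (F : (Fin n → ℕ) → ℂ) :
    ∑ f ∈ GammaC n k, F (emap n f) = ∑ t ∈ Tuples n k, F t := by
  refine Finset.sum_nbij' (i := emap n) (j := fun t j => t j - (n - (j : ℕ)))
    ?_ ?_ ?_ ?_ ?_
  · intro f hf
    obtain ⟨hb, hmono⟩ := mem_GammaC_iff.mp hf
    refine mem_Tuples_iff.mpr ⟨fun j => ?_, fun i j hij => ?_, fun j => ?_⟩
    · have := hb j; have := j.isLt; simp only [emap]; omega
    · have h1 : f j ≤ f i := hmono i j (le_of_lt hij)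
      have h2 : (i : ℕ) < (j : ℕ) := hij
      have := j.isLt
      simp only [emap]; omega
    · have := j.isLt; simp only [emap]; omega
  · intro t ht
    obtain ⟨hb, hdec, hpos⟩ := mem_Tuples_iff.mp ht
    have gap := Tuples_gap ht
    refine mem_GammaC_iff.mpr ⟨fun j => ?_, fun i j hij => ?_⟩
    · show t j - (n - (j : ℕ)) ≤ k
      have hn0 : 0 < n := j.pos
      have h0 := gap (j : ℕ) ⟨0, hn0⟩ j (by simp)
      have := hb (⟨0, hn0⟩ : Fin n); have := j.isLt
      omega
    · show t j - (n - (j : ℕ)) ≤ t i - (n - (i : ℕ))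
      have h1 := gap ((j : ℕ) - (i : ℕ)) i j (by have : (i:ℕ) ≤ (j:ℕ) := hij; omega)
      have := j.isLt; have := i.isLt
      omega
  · intro f _
    funext j
    show (emap n f j) - (n - (j : ℕ)) = f j
    simp [emap]
  · intro t ht
    have gap := Tuples_gap ht
    obtain ⟨-, -, hpos⟩ := mem_Tuples_iff.mp ht
    funext j
    show (t j - (n - (j : ℕ))) + (n - (j : ℕ)) = t j
    have hn0 : 0 < n := j.pos
    have hlast : n - 1 < n := by omega
    have h1 := gap ((n - 1) - (j : ℕ)) j ⟨n - 1, hlast⟩ (by simp; have := j.isLt; omega)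
    have h2 := hpos (⟨n - 1, hlast⟩ : Fin n)
    have := j.isLt
    omega
  · intro f _
    rfl

lemma Qdim_eq (f : Fin n → ℕ) :
    Qdim s n f = (-1 : ℂ) ^ (∑ j, f j) *
      (Pprod s n (emap n f) / Pprod s n (emap n (fun _ => 0))) := by
  rw [Qdim, Pprod, Pprod]
  have e1 : ∀ j : Fin n,
      br s (2 * n + 2 + 2 * (f j : ℤ) - 2 * ((j : ℕ) + 1)) /
        br s (2 * n + 2 - 2 * (((j : ℕ) : ℤ) + 1))
      = br s (2 * ((emap n f j : ℕ) : ℤ)) / br s (2 * ((emap n (fun _ => 0) j : ℕ) : ℤ)) := by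
    intro j
    rw [emap_cast, emap_cast]
    norm_num
    congr 2 <;> ring
  have e2 : ∀ p ∈ (Finset.univ ×ˢ Finset.univ : Finset (Fin n × Fin n)).filter
      (fun p => p.1 < p.2),
      br s (2 * n + 2 + (f p.1 : ℤ) - ((p.1 : ℕ) + 1) + (f p.2 : ℤ) - ((p.2 : ℕ) + 1)) *
        br s ((f p.1 : ℤ) - ((p.1 : ℕ) + 1) - (f p.2 : ℤ) + ((p.2 : ℕ) + 1)) /
      (br s (2 * n + 2 - (((p.1 : ℕ) : ℤ) + 1) - (((p.2 : ℕ) : ℤ) + 1)) *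
        br s ((((p.2 : ℕ) : ℤ) + 1) - (((p.1 : ℕ) : ℤ) + 1)))
      = (br s (((emap n f p.1 : ℕ) : ℤ) + ((emap n f p.2 : ℕ) : ℤ)) *
          br s (((emap n f p.1 : ℕ) : ℤ) - ((emap n f p.2 : ℕ) : ℤ))) /
        (br s (((emap n (fun _ => 0) p.1 : ℕ) : ℤ) + ((emap n (fun _ => 0) p.2 : ℕ) : ℤ)) *
          br s (((emap n (fun _ => 0) p.1 : ℕ) : ℤ) - ((emap n (fun _ => 0) p.2 : ℕ) : ℤ))) := by
    intro p _
    rw [emap_cast, emap_cast, emap_cast, emap_cast]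
    norm_num
    congr 2 <;> ring_nf
  rw [Finset.prod_congr rfl fun j _ => e1 j, Finset.prod_congr rfl e2,
    Finset.prod_div_distrib, Finset.prod_div_distrib]
  ring

lemma Pprod_t0_ne (hs : IsPrimitiveRoot s (2 * (2*n+2*k+1))) :
    Pprod s n (emap n (fun _ => 0)) ≠ 0 := by
  rw [Pprod]
  have hc : ∀ j : Fin n, ((emap n (fun _ => 0) j : ℕ) : ℤ) = (n : ℤ) - ((j : ℕ) : ℤ) := by
    intro j
    rw [emap_cast]; push_cast; ring
  refine mul_ne_zero ?_ ?_
  · rw [Finset.prod_ne_zero_iff]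
    intro j _
    rw [hc]
    refine br_ne_zero hs ?_ ?_
    · have := j.isLt; omega
    · have := j.isLt; push_cast; omega
  · rw [Finset.prod_ne_zero_iff]
    intro p hp
    have hlt : p.1 < p.2 := (Finset.mem_filter.mp hp).2
    have h1 : ((p.1 : ℕ) : ℤ) < ((p.2 : ℕ) : ℤ) := by exact_mod_cast hlt
    have h2 := p.1.isLt; have h3 := p.2.isLt
    rw [hc, hc]
    refine mul_ne_zero (br_ne_zero hs ?_ ?_) (br_ne_zero hs ?_ ?_)
    · omega
    · push_cast; omega
    · omega
    · push_cast; omega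
end

section
variable {n k : ℕ} {s : ℂ}

lemma sum_tuples_sq (hs : IsPrimitiveRoot s (2 * (2*n+2*k+1))) :
    ∑ t ∈ Tuples n k, Pprod s n t ^ 2 = (-((2*n+2*k+1 : ℕ) : ℂ)) ^ n := by
  have hs0 : s ≠ 0 := hs.ne_zero (by positivity)
  have h1 : ∀ t : Fin n → ℕ, Pprod s n t ^ 2 = (Dmat s n t).det ^ 2 := by
    intro t
    rw [Pprod_eq_det s hs0 t, mul_pow, Finset.prod_const, ← pow_mul,
      mul_comm _ 2, pow_mul]
    norm_num
    rfl
  rw [Finset.sum_congr rfl fun t _ => h1 t]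
  have hfac : ((Nat.factorial n : ℕ) : ℂ) ≠ 0 :=
    Nat.cast_ne_zero.mpr (Nat.factorial_ne_zero n)
  apply mul_left_cancel₀ hfac
  rw [← box_to_tuples, sum_box hs]

end

/-- The genus-`g` Verlinde formula for the modularization
`C̃B^{n,k}` (`l = 2n+2k+1`, `s` a primitive `2l`-th root of unity):
`(∑_{λ∈Γ} Q(λ)²)^{g-1} ∑_{λ∈Γ} Q(λ)^{2(1-g)}
 = (-(2n+2k+1))^{n(g-1)} ∑_{n+k ≥ l_1 > … > l_n > 0}
   (∏_j [2l_j] ∏_{i<j} [l_i+l_j][l_i-l_j])^{2(1-g)}`. -/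
theorem verlinde_CB (n k : ℕ) (hn : 1 ≤ n) (hk : 1 ≤ k)
    (s : ℂ) (hs : IsPrimitiveRoot s (2 * (2 * n + 2 * k + 1)))
    (g : ℕ) (hg : 1 ≤ g) :
    (∑ f ∈ GammaC n k, Qdim s n f ^ 2) ^ ((g : ℤ) - 1) *
      ∑ f ∈ GammaC n k, Qdim s n f ^ (2 * (1 - (g : ℤ))) =
    (-((2 * n + 2 * k + 1 : ℕ) : ℂ)) ^ ((n : ℤ) * ((g : ℤ) - 1)) *
      ∑ t ∈ Tuples n k, Pprod s n t ^ (2 * (1 - (g : ℤ))) := by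
  have hs0 : s ≠ 0 := hs.ne_zero (by positivity)
  set P0 : ℂ := Pprod s n (emap n (fun _ => 0)) with hP0
  have hP0ne : P0 ≠ 0 := Pprod_t0_ne hs
  set m : ℕ := g - 1 with hm
  have hgm : (g : ℤ) - 1 = ((m : ℕ) : ℤ) := by push_cast [hm]; omega
  have hexp : 2 * (1 - (g : ℤ)) = -(((2*m : ℕ) : ℤ)) := by push_cast [hm]; omega
  have hQ2 : ∀ f : Fin n → ℕ,
      Qdim s n f ^ 2 = Pprod s n (emap n f) ^ 2 / P0 ^ 2 := by
    intro f
    rw [Qdim_eq, mul_pow, div_pow, ← pow_mul, mul_comm _ 2, pow_mul]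
    norm_num
    rw [← hP0]
  have hQm : ∀ f : Fin n → ℕ,
      Qdim s n f ^ (2 * (1 - (g : ℤ)))
        = P0 ^ (2*m) * (Pprod s n (emap n f) ^ (2*m))⁻¹ := by
    intro f
    rw [hexp, zpow_neg, zpow_natCast, Qdim_eq, mul_pow, div_pow,
      ← pow_mul, mul_comm _ (2*m), pow_mul, pow_mul]
    norm_num
    rw [div_eq_mul_inv, ← hP0]
  have hPm : ∀ t : Fin n → ℕ,
      Pprod s n t ^ (2 * (1 - (g : ℤ))) = (Pprod s n t ^ (2*m))⁻¹ := by
    intro t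
    rw [hexp, zpow_neg, zpow_natCast]
  rw [Finset.sum_congr rfl fun f _ => hQ2 f, Finset.sum_congr rfl fun f _ => hQm f,
    Finset.sum_congr rfl fun t _ => hPm t]
  have hG1 : ∑ f ∈ GammaC n k, Pprod s n (emap n f) ^ 2 / P0 ^ 2
      = ∑ t ∈ Tuples n k, Pprod s n t ^ 2 / P0 ^ 2 := by
    have h := sum_Gamma (n := n) (k := k) (fun t => Pprod s n t ^ 2 / P0 ^ 2)
    exact h
  have hG2 : ∑ f ∈ GammaC n k, P0 ^ (2*m) * (Pprod s n (emap n f) ^ (2*m))⁻¹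
      = ∑ t ∈ Tuples n k, P0 ^ (2*m) * (Pprod s n t ^ (2*m))⁻¹ := by
    have h := sum_Gamma (n := n) (k := k)
      (fun t => P0 ^ (2*m) * (Pprod s n t ^ (2*m))⁻¹)
    exact h
  rw [hG1, hG2, ← Finset.sum_div, sum_tuples_sq hs, ← Finset.mul_sum]
  rw [hgm, zpow_natCast,
    show ((n:ℤ) * ((m:ℕ):ℤ)) = ((n*m : ℕ) : ℤ) by push_cast; ring, zpow_natCast]
  have h2 : P0 ^ (2*m) ≠ 0 := pow_ne_zero _ hP0ne
  rw [div_pow, ← pow_mul, ← pow_mul]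
  field_simp
end
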